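/- For a Saavedra unit (I, α), the functors X ↦ I⊗X and X ↦ X⊗I are not merely fully faithful but are equivalences of categories. -/

import Mathlib

open CategoryTheory

universe v u v' u'

/-- A strict semi-monoidal category: a category with an associative tensor product
(associativity strict on objects, expressed with `eqToHom` on morphisms). -/
structure SemiMonoidal (C : Type u) [Category.{v} C] where
  t : C → C → C
  h : {X₁ X₂ Y₁ Y₂ : C} → (X₁ ⟶ X₂) → (Y₁ ⟶ Y₂) → (t X₁ Y₁ ⟶ t X₂ Y₂)
  h_id : ∀ X Y : C, h (𝟙 X) (𝟙 Y) = 𝟙 (t X Y)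
  h_comp : ∀ {X₁ X₂ X₃ Y₁ Y₂ Y₃ : C} (f₁ : X₁ ⟶ X₂) (f₂ : X₂ ⟶ X₃)
      (g₁ : Y₁ ⟶ Y₂) (g₂ : Y₂ ⟶ Y₃),
      h (f₁ ≫ f₂) (g₁ ≫ g₂) = h f₁ g₁ ≫ h f₂ g₂
  assoc : ∀ X Y Z : C, t (t X Y) Z = t X (t Y Z)
  h_assoc : ∀ {X₁ X₂ Y₁ Y₂ Z₁ Z₂ : C} (f : X₁ ⟶ X₂) (g : Y₁ ⟶ Y₂) (k : Z₁ ⟶ Z₂),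
      h (h f g) k =
        eqToHom (assoc X₁ Y₁ Z₁) ≫ h f (h g k) ≫ eqToHom (assoc X₂ Y₂ Z₂).symm

variable {C : Type u} [Category.{v} C]

/-- Tensoring with `I` on the left, as a functor. -/
def tensorLeftF (M : SemiMonoidal C) (I : C) : C ⥤ C where
  obj X := M.t I X
  map f := M.h (𝟙 I) f
  map_id X := M.h_id I X
  map_comp f g := by
    have := M.h_comp (𝟙 I) (𝟙 I) f g
    simpa using this

/-- Tensoring with `I` on the right, as a functor. -/
def tensorRightF (M : SemiMonoidal C) (I : C) : C ⥤ C where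
  obj X := M.t X I
  map f := M.h f (𝟙 I)
  map_id X := M.h_id X I
  map_comp f g := by
    have := M.h_comp f g (𝟙 I) (𝟙 I)
    simpa using this

/-- For a Saavedra unit `(I, α)`, tensoring with `I` on either side is not merely
fully faithful but an equivalence of categories. -/
theorem stmt10 (M : SemiMonoidal C) (I : C) (α : M.t I I ⟶ I) (hα : IsIso α)
    (ffL : ∀ X Y : C, Function.Bijective fun f : X ⟶ Y => M.h (𝟙 I) f)
    (ffR : ∀ X Y : C, Function.Bijective fun f : X ⟶ Y => M.h f (𝟙 I)) :
    (tensorLeftF M I).IsEquivalence ∧ (tensorRightF M I).IsEquivalence := by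
  have hL : (tensorLeftF M I).IsEquivalence := by
    haveI : (tensorLeftF M I).Faithful := ⟨fun {X Y f g} h => (ffL X Y).1 h⟩
    haveI : (tensorLeftF M I).Full := ⟨fun {X Y} g => (ffL X Y).2 g⟩
    haveI : (tensorLeftF M I).EssSurj := by
      constructor
      intro X
      obtain ⟨f, hf'⟩ := (ffL (M.t I X) X).2 (eqToHom (M.assoc I I X).symm ≫ M.h α (𝟙 X))
      have hf : M.h (𝟙 I) f = eqToHom (M.assoc I I X).symm ≫ M.h α (𝟙 X) := hf'
      have hiso : IsIso (M.h α (𝟙 X)) := by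
        refine ⟨M.h (inv α) (𝟙 X), ?_, ?_⟩
        · rw [← M.h_comp, IsIso.hom_inv_id, Category.comp_id, M.h_id]
        · rw [← M.h_comp, IsIso.inv_hom_id, Category.comp_id, M.h_id]
      have : IsIso ((tensorLeftF M I).map f) := by
        show IsIso (M.h (𝟙 I) f)
        rw [hf]
        exact IsIso.comp_isIso
      haveI := this
      haveI : IsIso f := isIso_of_fully_faithful (tensorLeftF M I) f
      exact let e : M.t I X ≅ X := asIso f; ⟨X, ⟨e⟩⟩
    exact ⟨inferInstance, inferInstance, inferInstance⟩
  have hR : (tensorRightF M I).IsEquivalence := by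
    haveI : (tensorRightF M I).Faithful := ⟨fun {X Y f g} h => (ffR X Y).1 h⟩
    haveI : (tensorRightF M I).Full := ⟨fun {X Y} g => (ffR X Y).2 g⟩
    haveI : (tensorRightF M I).EssSurj := by
      constructor
      intro X
      obtain ⟨f, hf'⟩ := (ffR (M.t X I) X).2 (eqToHom (M.assoc X I I) ≫ M.h (𝟙 X) α)
      have hf : M.h f (𝟙 I) = eqToHom (M.assoc X I I) ≫ M.h (𝟙 X) α := hf'
      have hiso : IsIso (M.h (𝟙 X) α) := by
        refine ⟨M.h (𝟙 X) (inv α), ?_, ?_⟩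
        · rw [← M.h_comp, IsIso.hom_inv_id, Category.comp_id, M.h_id]
        · rw [← M.h_comp, IsIso.inv_hom_id, Category.comp_id, M.h_id]
      have : IsIso ((tensorRightF M I).map f) := by
        show IsIso (M.h f (𝟙 I))
        rw [hf]
        exact IsIso.comp_isIso
      haveI := this
      haveI : IsIso f := isIso_of_fully_faithful (tensorRightF M I) f
      exact let e : M.t X I ≅ X := asIso f; ⟨X, ⟨e⟩⟩
    exact ⟨inferInstance, inferInstance, inferInstance⟩
  exact ⟨hL, hR⟩
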